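/- Let Λ = diag(λ₁,…,λₙ) with all λᵢ > 0, Re > 0, c ∈ ℝⁿ, and let N be linear and energy preserving. Consider ẋ = Ax + N(x)x with Ax := −(1/Re)Λx + N(c)x + N(x)c. Then A_{−c} = −(1/Re)Λ ≺ 0, and consequently there exists r > 0 such that the closed ball B_r(−c) is invariant for the dynamics. -/

import Mathlib

open Matrix

/-- Euclidean norm on `Fin n → ℝ`. -/
noncomputable def enorm {n : ℕ} (v : Fin n → ℝ) : ℝ := Real.sqrt (∑ i, v i ^ 2)

lemma enorm_nonneg' {n : ℕ} (v : Fin n → ℝ) : 0 ≤ _root_.enorm v := Real.sqrt_nonneg _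

lemma enorm_neg' {n : ℕ} (v : Fin n → ℝ) : _root_.enorm (-v) = _root_.enorm v := by simp [_root_.enorm]

lemma dot_le_enorm_mul {n : ℕ} (v w : Fin n → ℝ) : v ⬝ᵥ w ≤ _root_.enorm v * _root_.enorm w := by
  have h := Finset.sum_mul_sq_le_sq_mul_sq Finset.univ v w
  calc v ⬝ᵥ w ≤ |v ⬝ᵥ w| := le_abs_self _
    _ = Real.sqrt ((v ⬝ᵥ w) ^ 2) := (Real.sqrt_sq_eq_abs _).symm
    _ ≤ Real.sqrt ((∑ i, v i ^ 2) * (∑ i, w i ^ 2)) := Real.sqrt_le_sqrt h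
    _ = _root_.enorm v * _root_.enorm w := Real.sqrt_mul (by positivity) _

/-- If `g' < 0` whenever `g ≥ R`, then `g ≤ R` is forward invariant. -/
lemma invariance_aux {g G : ℝ → ℝ} {R : ℝ} (hg : ∀ t, HasDerivAt g (G t) t)
    (hG : ∀ t, R ≤ g t → G t < 0) {t₀ t : ℝ} (hle : t₀ ≤ t) (h0 : g t₀ ≤ R) : g t ≤ R := by
  by_contra hgt
  push_neg at hgt
  have hcont : Continuous g := continuous_iff_continuousAt.2 fun u => (hg u).continuousAt
  set S : Set ℝ := Set.Icc t₀ t ∩ g ⁻¹' Set.Iic R with hS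
  have hne : S.Nonempty := ⟨t₀, ⟨le_refl _, hle⟩, h0⟩
  have hbdd : BddAbove S := ⟨t, fun u hu => hu.1.2⟩
  have hclosed : IsClosed S := (isClosed_Icc).inter (isClosed_Iic.preimage hcont)
  set s := sSup S with hs
  have hsmem : s ∈ S := hclosed.csSup_mem hne hbdd
  have hgs : g s ≤ R := hsmem.2
  have hst : s < t := lt_of_le_of_ne hsmem.1.2 (fun h => absurd (h ▸ hgs) (not_le.2 hgt))
  have hmid : ∀ u ∈ Set.Ioo s t, R ≤ g u := by
    intro u hu
    by_contra hgu
    push_neg at hgu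
    have huS : u ∈ S := ⟨⟨hsmem.1.1.trans hu.1.le, hu.2.le⟩, hgu.le⟩
    exact absurd (le_csSup hbdd huS) (not_le.2 hu.1)
  have hanti : StrictAntiOn g (Set.Icc s t) := by
    apply strictAntiOn_of_deriv_neg (convex_Icc _ _) hcont.continuousOn
    intro u hu
    rw [interior_Icc] at hu
    rw [(hg u).deriv]
    exact hG u (hmid u hu)
  have := hanti ⟨le_refl _, hst.le⟩ ⟨hst.le, le_refl _⟩ hst
  linarith

/-- For fluid-type dynamics `ẋ = Ax + N(x)x` with
`Ax = −(1/Re)Λx + N(c)x + N(x)c` (`Λ = diag(λ) ≻ 0`), the perturbed matrix satisfies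
`A_{−c} = −(1/Re)Λ ≺ 0`, and there is an invariant ball `B_r(−c)` for the dynamics. -/
theorem stmt17 {n : ℕ} (Re : ℝ) (hRe : 0 < Re)
    (lam : Fin n → ℝ) (hlam : ∀ i, 0 < lam i) (c : Fin n → ℝ)
    (N : (Fin n → ℝ) →ₗ[ℝ] Matrix (Fin n) (Fin n) ℝ)
    (hN : ∀ x : Fin n → ℝ, x ⬝ᵥ (N x).mulVec x = 0)
    (A : (Fin n → ℝ) → Fin n → ℝ)
    (hA : ∀ v, A v = -(1 / Re) • (Matrix.diagonal lam).mulVec v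
      + (N c).mulVec v + (N v).mulVec c) :
    (∀ v : Fin n → ℝ,
        A v + (N v).mulVec (-c) + (N (-c)).mulVec v
          = -(1 / Re) • (Matrix.diagonal lam).mulVec v) ∧
      ∃ r : ℝ, 0 < r ∧ ∀ x : ℝ → Fin n → ℝ,
        (∀ t : ℝ, HasDerivAt x (A (x t) + (N (x t)).mulVec (x t)) t) →
        ∀ t₀ t : ℝ, t₀ ≤ t → _root_.enorm (x t₀ - -c) ≤ r → _root_.enorm (x t - -c) ≤ r := by
  have key : ∀ y : Fin n → ℝ,
      (y + c) ⬝ᵥ ((N c).mulVec y + (N y).mulVec c + (N y).mulVec y)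
        = -(y ⬝ᵥ (N c).mulVec c) := by
    intro y
    have h1 := hN (y + c)
    have h2 := hN (y - c)
    have h3 := hN y
    have h4 := hN c
    simp only [map_add, map_sub, Matrix.add_mulVec, Matrix.sub_mulVec, Matrix.mulVec_add,
      Matrix.mulVec_sub, dotProduct_add, dotProduct_sub, add_dotProduct, sub_dotProduct] at *
    linarith
  refine ⟨fun v => by rw [hA, map_neg, Matrix.neg_mulVec, Matrix.mulVec_neg]; abel, ?_⟩
  rcases Nat.eq_zero_or_pos n with hn | hn
  · subst hn
    exact ⟨1, one_pos, fun x _ t₀ t _ _ => by simp [_root_.enorm]⟩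
  haveI : Nonempty (Fin n) := Fin.pos_iff_nonempty.1 hn
  set Λ := Matrix.diagonal lam with hΛdef
  set α : ℝ := Finset.univ.inf' Finset.univ_nonempty lam with hαdef
  have hα : 0 < α := (Finset.lt_inf'_iff _).2 fun i _ => hlam i
  set w : Fin n → ℝ := (N c).mulVec c with hwdef
  set eΛc : ℝ := _root_.enorm (Λ.mulVec c) with heΛc
  set ew : ℝ := _root_.enorm w with hew
  set b₀ : ℝ := (1 / Re) * eΛc + ew with hb₀def
  set d₀ : ℝ := |c ⬝ᵥ w| with hd₀def
  have hb₀ : 0 ≤ b₀ := by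
    have := enorm_nonneg' (Λ.mulVec c); have := enorm_nonneg' w
    have : 0 ≤ (1 : ℝ) / Re := by positivity
    rw [hb₀def]; nlinarith [enorm_nonneg' (Λ.mulVec c), enorm_nonneg' w]
  have hd₀ : 0 ≤ d₀ := abs_nonneg _
  set r : ℝ := max 1 (Re / α * (b₀ + d₀ + 1)) with hrdef
  have hr : 0 < r := lt_of_lt_of_le one_pos (le_max_left _ _)
  refine ⟨r, hr, ?_⟩
  intro x hx t₀ t hle hinit
  set g : ℝ → ℝ := fun s => ∑ i, (x s i + c i) ^ 2 with hgdef
  have hgnn : ∀ s, 0 ≤ g s := fun s => Finset.sum_nonneg fun i _ => sq_nonneg _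
  have henorm : ∀ s, _root_.enorm (x s - -c) = Real.sqrt (g s) := by
    intro s
    unfold _root_.enorm
    congr 1
    exact Finset.sum_congr rfl fun i _ => by simp [sub_neg_eq_add]
  set G : ℝ → ℝ := fun s =>
    2 * ((fun i => x s i + c i) ⬝ᵥ (A (x s) + (N (x s)).mulVec (x s))) with hGdef
  have hg' : ∀ s, HasDerivAt g (G s) s := by
    intro s
    have hcoord : ∀ i : Fin n,
        HasDerivAt (fun u => x u i) ((A (x s) + (N (x s)).mulVec (x s)) i) s := fun i =>
      (ContinuousLinearMap.proj (R := ℝ) (φ := fun _ : Fin n => ℝ) i).hasFDerivAt.comp_hasDerivAt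
        s (hx s)
    have h : HasDerivAt g
        (∑ i, (2 : ℕ) * (x s i + c i) ^ 1 * (A (x s) + (N (x s)).mulVec (x s)) i) s := by
      apply HasDerivAt.fun_sum
      intro i _
      exact ((hcoord i).add_const (c i)).pow 2
    convert h using 1
    rw [hGdef]
    simp only [dotProduct, Finset.mul_sum]
    exact Finset.sum_congr rfl fun i _ => by ring
  have hG : ∀ s, r ^ 2 ≤ g s → G s < 0 := by
    intro s hs
    set u : Fin n → ℝ := fun i => x s i + c i with hu
    have hux : x s = u - c := by funext i; simp [hu]
    have hxu : x s + c = u := by funext i; simp [hu]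
    set ρ : ℝ := Real.sqrt (g s) with hρ
    have hρ0 : 0 ≤ ρ := Real.sqrt_nonneg _
    have hρsq : ρ ^ 2 = g s := Real.sq_sqrt (hgnn s)
    have hρr : r ≤ ρ := by
      calc r = Real.sqrt (r ^ 2) := (Real.sqrt_sq hr.le).symm
        _ ≤ Real.sqrt (g s) := Real.sqrt_le_sqrt hs
    have hρ1 : (1 : ℝ) ≤ ρ := le_trans (le_max_left _ _) hρr
    have h5 : Re * (b₀ + d₀ + 1) ≤ α * ρ := by
      have h6 : Re / α * (b₀ + d₀ + 1) ≤ ρ := le_trans (le_max_right _ _) hρr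
      calc Re * (b₀ + d₀ + 1) = α * (Re / α * (b₀ + d₀ + 1)) := by field_simp
        _ ≤ α * ρ := mul_le_mul_of_nonneg_left h6 hα.le
    have hue : _root_.enorm u = ρ := rfl
    -- the dot product identity
    have hkey := key (x s)
    rw [hxu] at hkey
    have e2 : u ⬝ᵥ Λ.mulVec (x s) = u ⬝ᵥ Λ.mulVec u - u ⬝ᵥ Λ.mulVec c := by
      rw [hux, Matrix.mulVec_sub, dotProduct_sub]
    have e3 : x s ⬝ᵥ w = u ⬝ᵥ w - c ⬝ᵥ w := by rw [hux, sub_dotProduct]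
    have hdot : u ⬝ᵥ (A (x s) + (N (x s)).mulVec (x s))
        = -((1 / Re) * (u ⬝ᵥ Λ.mulVec u)) + (1 / Re) * (u ⬝ᵥ Λ.mulVec c)
          - (u ⬝ᵥ w) + (c ⬝ᵥ w) := by
      rw [hA]
      simp only [dotProduct_add, dotProduct_smul, smul_eq_mul, neg_mul] at *
      linear_combination hkey - (1 / Re) * e2 - e3
    -- lower bound on the quadratic form
    have hΛ : α * g s ≤ u ⬝ᵥ Λ.mulVec u := by
      have hq : u ⬝ᵥ Λ.mulVec u = ∑ i, lam i * u i ^ 2 := by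
        rw [hΛdef]
        simp [dotProduct, Matrix.mulVec_diagonal]
        exact Finset.sum_congr rfl fun i _ => by ring
      rw [hq, hgdef, Finset.mul_sum]
      apply Finset.sum_le_sum
      intro i _
      exact mul_le_mul_of_nonneg_right (Finset.inf'_le _ (Finset.mem_univ i)) (sq_nonneg _)
    -- Cauchy–Schwarz bounds
    have f1 : (1 / Re) * (α * g s) ≤ (1 / Re) * (u ⬝ᵥ Λ.mulVec u) :=
      mul_le_mul_of_nonneg_left hΛ (by positivity)
    have f2 : (1 / Re) * (u ⬝ᵥ Λ.mulVec c) ≤ (1 / Re) * (ρ * eΛc) := by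
      have := dot_le_enorm_mul u (Λ.mulVec c)
      rw [hue] at this
      exact mul_le_mul_of_nonneg_left this (by positivity)
    have f3 : -(u ⬝ᵥ w) ≤ ρ * ew := by
      have := dot_le_enorm_mul (-u) w
      rw [enorm_neg', hue, neg_dotProduct] at this
      exact this
    have f4 : c ⬝ᵥ w ≤ d₀ := le_abs_self _
    -- numeric conclusion
    have hmain : Re * (ρ * b₀ + d₀) < α * g s := by
      nlinarith [mul_le_mul_of_nonneg_right h5 hρ0, mul_pos hRe (lt_of_lt_of_le one_pos hρ1),
        mul_nonneg (mul_nonneg hRe.le hd₀) (sub_nonneg.2 hρ1)]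
    have hmain2 : ρ * b₀ + d₀ < (1 / Re) * (α * g s) := by
      have h7 := (mul_lt_mul_iff_right₀ (show (0:ℝ) < 1 / Re by positivity)).2 hmain
      calc ρ * b₀ + d₀ = (1 / Re) * (Re * (ρ * b₀ + d₀)) := by field_simp
        _ < (1 / Re) * (α * g s) := h7
    have hexp : ρ * b₀ = (1 / Re) * (ρ * eΛc) + ρ * ew := by rw [hb₀def]; ring
    have hdotneg : u ⬝ᵥ (A (x s) + (N (x s)).mulVec (x s)) < 0 := by
      rw [hdot]; linarith
    rw [hGdef]
    simp only
    rw [← hu]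
    linarith
  -- apply the invariance lemma
  have h0 : g t₀ ≤ r ^ 2 := by
    have h1 : Real.sqrt (g t₀) ≤ r := (henorm t₀) ▸ hinit
    calc g t₀ = Real.sqrt (g t₀) ^ 2 := (Real.sq_sqrt (hgnn t₀)).symm
      _ ≤ r ^ 2 := pow_le_pow_left₀ (Real.sqrt_nonneg _) h1 2
  have hfin : g t ≤ r ^ 2 := invariance_aux hg' hG hle h0
  rw [henorm t]
  calc Real.sqrt (g t) ≤ Real.sqrt (r ^ 2) := Real.sqrt_le_sqrt hfin
    _ = r := Real.sqrt_sq hr.le
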